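/- For any real symmetric positive semidefinite 2×2 matrices A and B and any integer K ≥ 1, it holds that (1/2) ‖(AB)^K + (BA)^K‖ ≤ ‖(1/2)(AB + BA)‖^K. -/

import Mathlib

open Matrix

/-- Spectral norm (operator 2-norm) of a real square matrix. -/
noncomputable def specNorm {d : ℕ} (A : Matrix (Fin d) (Fin d) ℝ) : ℝ :=
  ‖Matrix.toEuclideanCLM (𝕜 := ℝ) A‖

lemma specNorm_le_of (X : Matrix (Fin 2) (Fin 2) ℝ) (c : ℝ) (hc : 0 ≤ c)
    (h : ∀ x y : ℝ, (X 0 0 * x + X 0 1 * y)^2 + (X 1 0 * x + X 1 1 * y)^2 ≤ c^2 * (x^2+y^2)) :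
    specNorm X ≤ c := by
  apply ContinuousLinearMap.opNorm_le_bound _ hc
  intro v
  have hv : ∀ i, (Matrix.toEuclideanCLM (𝕜 := ℝ) X v) i = X.mulVec (fun j => v j) i := by
    intro i; rfl
  have hnv : ‖Matrix.toEuclideanCLM (𝕜 := ℝ) X v‖
      = Real.sqrt ((X.mulVec (fun j => v j) 0)^2 + (X.mulVec (fun j => v j) 1)^2) := by
    rw [EuclideanSpace.norm_eq]
    simp [hv, Fin.sum_univ_two, Real.norm_eq_abs, sq_abs]
  have hnv2 : ‖v‖ = Real.sqrt ((v 0)^2 + (v 1)^2) := by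
    rw [EuclideanSpace.norm_eq]
    simp [Fin.sum_univ_two, Real.norm_eq_abs, sq_abs]
  rw [hnv, hnv2]
  rw [show c * Real.sqrt ((v 0)^2 + (v 1)^2) = Real.sqrt (c^2 * ((v 0)^2 + (v 1)^2)) by
    rw [Real.sqrt_mul (by positivity), Real.sqrt_sq hc]]
  apply Real.sqrt_le_sqrt
  have := h (v 0) (v 1)
  simpa [Matrix.mulVec, dotProduct, Fin.sum_univ_two] using this

lemma specNorm_ge_of (X : Matrix (Fin 2) (Fin 2) ℝ) (s : ℝ) (hs : 0 ≤ s)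
    (w : Fin 2 → ℝ) (hw : w ≠ 0) (hev : X.mulVec w = s • w) :
    s ≤ specNorm X := by
  set v : EuclideanSpace ℝ (Fin 2) := (WithLp.equiv 2 (Fin 2 → ℝ)).symm w with hvdef
  have hv0 : v ≠ 0 := by simpa [hvdef] using hw
  have happ : Matrix.toEuclideanCLM (𝕜 := ℝ) X v = s • v := by
    rw [hvdef]; show Matrix.toEuclideanCLM (𝕜 := ℝ) X (WithLp.toLp 2 w) = _
    rw [Matrix.toEuclideanCLM_toLp, hev]; rfl
  have hle := (Matrix.toEuclideanCLM (𝕜 := ℝ) X).le_opNorm v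
  rw [happ, norm_smul, Real.norm_eq_abs, abs_of_nonneg hs] at hle
  exact le_of_mul_le_mul_right hle (norm_pos_iff.mpr hv0)

lemma quadform_nonneg (A1 C1 be x y : ℝ) (h1 : 0 ≤ A1) (h2 : 0 ≤ C1) (h3 : A1*C1 = be^2) :
    0 ≤ A1*x^2 - 2*be*x*y + C1*y^2 := by
  rcases eq_or_lt_of_le (add_nonneg h1 h2) with h | hpos
  · have hA : A1 = 0 := by linarith
    have hC : C1 = 0 := by linarith
    have hb : be = 0 := by nlinarith [h3, hA]
    simp [hA, hC, hb]
  · have key : (A1+C1) * (A1*x^2 - 2*be*x*y + C1*y^2) = (A1*x - be*y)^2 + (C1*y - be*x)^2 := by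
      linear_combination (x^2+y^2) * h3
    nlinarith [key, sq_nonneg (A1*x - be*y), sq_nonneg (C1*y - be*x), hpos]

lemma main_scalar (al be ga P Q s1 s2 c x y : ℝ)
    (hR1 : al*x^2+2*be*x*y+ga*y^2 ≤ s1*(x^2+y^2))
    (hR2 : s2*(x^2+y^2) ≤ al*x^2+2*be*x*y+ga*y^2)
    (hs1 : s1^2 = (al+ga)*s1 - (al*ga-be^2))
    (hs2 : s2^2 = (al+ga)*s2 - (al*ga-be^2))
    (hf1 : (Q*s1+P)^2 ≤ c^2) (hf2 : (Q*s2+P)^2 ≤ c^2) :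
    ((2*Q*al+2*P)*x + (2*Q*be)*y)^2 + ((2*Q*be)*x + (2*Q*ga+2*P)*y)^2 ≤ (2*c)^2*(x^2+y^2) := by
  set N := x^2+y^2 with hN
  set R := al*x^2+2*be*x*y+ga*y^2 with hR
  have hN0 : 0 ≤ N := by positivity
  have key : ((2*Q*al+2*P)*x + (2*Q*be)*y)^2 + ((2*Q*be)*x + (2*Q*ga+2*P)*y)^2
      = 4*((2*P*Q+Q^2*(al+ga)) * R + (P^2 - Q^2*(al*ga-be^2))*N) := by
    rw [hN, hR]; ring
  rw [key]
  have hrhs : (2*c)^2*N = 4*(c^2*N) := by ring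
  rw [hrhs]
  rcases le_or_gt 0 (2*P*Q+Q^2*(al+ga)) with hu | hu
  · have h1 : (2*P*Q+Q^2*(al+ga)) * R ≤ (2*P*Q+Q^2*(al+ga)) * (s1*N) :=
      mul_le_mul_of_nonneg_left hR1 hu
    have h2 : (2*P*Q+Q^2*(al+ga)) * (s1*N) + (P^2 - Q^2*(al*ga-be^2))*N = (Q*s1+P)^2 * N := by
      linear_combination (-(Q^2)*N)*hs1
    have h3 : (Q*s1+P)^2 * N ≤ c^2*N := mul_le_mul_of_nonneg_right hf1 hN0
    linarith
  · have h1 : (2*P*Q+Q^2*(al+ga)) * R ≤ (2*P*Q+Q^2*(al+ga)) * (s2*N) := by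
      have := mul_le_mul_of_nonpos_left hR2 (le_of_lt hu)
      linarith
    have h2 : (2*P*Q+Q^2*(al+ga)) * (s2*N) + (P^2 - Q^2*(al*ga-be^2))*N = (Q*s2+P)^2 * N := by
      linear_combination (-(Q^2)*N)*hs2
    have h3 : (Q*s2+P)^2 * N ≤ c^2*N := mul_le_mul_of_nonneg_right hf2 hN0
    linarith

lemma psd_facts (A : Matrix (Fin 2) (Fin 2) ℝ) (hA : A.PosSemidef) :
    A 1 0 = A 0 1 ∧ 0 ≤ A 0 0 ∧ 0 ≤ A 1 1 ∧ (A 0 1)^2 ≤ A 0 0 * A 1 1 := by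
  have hsym : A 1 0 = A 0 1 := by
    have := congr_fun (congr_fun hA.1 0) 1
    simpa [Matrix.conjTranspose_apply] using this
  have hform : ∀ x y : ℝ, 0 ≤ A 0 0 * x^2 + 2 * A 0 1 * x * y + A 1 1 * y^2 := by
    intro x y
    have := hA.dotProduct_mulVec_nonneg (fun i => if i = 0 then x else y)
    simp [dotProduct, Matrix.mulVec, Fin.sum_univ_two] at this
    rw [hsym] at this
    nlinarith [this]
  have h0 := hform 1 0
  have h1 := hform 0 1
  simp at h0 h1
  refine ⟨hsym, by linarith, by linarith, ?_⟩
  have h2 := hform (A 0 1) (-(A 0 0))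
  have h3 := hform (A 1 1) (-(A 0 1))
  have h4 := hform 1 1
  have h5 := hform 1 (-1)
  rcases eq_or_lt_of_le (by linarith : (0:ℝ) ≤ A 0 0 + A 1 1) with h | h
  · nlinarith
  · nlinarith

/-- Cayley–Hamilton for 2×2 real matrices. -/
lemma ch2 (M : Matrix (Fin 2) (Fin 2) ℝ) :
    M*M = (M 0 0 + M 1 1) • M - (M 0 0 * M 1 1 - M 0 1 * M 1 0) • (1 : Matrix (Fin 2) (Fin 2) ℝ) := by
  ext i j
  fin_cases i <;> fin_cases j <;>
    simp [Matrix.mul_apply, Fin.sum_univ_two, Matrix.one_apply] <;> ring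

/-- coefficients (q_K, p_K) with M^K = q_K M + p_K I for a 2×2 matrix with trace t, det d. -/
noncomputable def qpSeq (t d : ℝ) : ℕ → ℝ × ℝ
  | 0 => (0, 1)
  | (K+1) => (t * (qpSeq t d K).1 + (qpSeq t d K).2, -(d * (qpSeq t d K).1))

lemma pow_rep (M : Matrix (Fin 2) (Fin 2) ℝ) (t d : ℝ)
    (ht : t = M 0 0 + M 1 1) (hd : d = M 0 0 * M 1 1 - M 0 1 * M 1 0) (K : ℕ) :
    M^K = (qpSeq t d K).1 • M + (qpSeq t d K).2 • (1 : Matrix (Fin 2) (Fin 2) ℝ) := by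
  induction K with
  | zero => simp [qpSeq]
  | succ n ih =>
    rw [pow_succ, ih, add_mul, smul_mul_assoc, smul_mul_assoc, one_mul, ch2 M, ← ht, ← hd]
    show _ = (qpSeq t d (n+1)).1 • M + (qpSeq t d (n+1)).2 • (1 : Matrix (Fin 2) (Fin 2) ℝ)
    simp only [qpSeq]
    module

lemma qp_facts (t d D lam mu s1 : ℝ) (hsum : lam + mu = t) (hprod : lam * mu = d)
    (hmu : 0 ≤ mu) (hml : mu ≤ lam) (hls : lam ≤ s1) (hDd : D ≤ d)
    (hs1eq : s1^2 = t*s1 - D) (K : ℕ) :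
    0 ≤ (qpSeq t d K).1 ∧ (qpSeq t d K).1 * lam + (qpSeq t d K).2 = lam^K
      ∧ (qpSeq t d K).1 * mu + (qpSeq t d K).2 = mu^K
      ∧ (qpSeq t d K).1 * s1 + (qpSeq t d K).2 ≤ s1^K := by
  have hlam0 : 0 ≤ lam := le_trans hmu hml
  have hs10 : 0 ≤ s1 := le_trans hlam0 hls
  have hle : lam^2 = t*lam - d := by linear_combination lam*hsum - hprod
  have hme : mu^2 = t*mu - d := by linear_combination mu*hsum - hprod
  induction K with
  | zero => simp [qpSeq]
  | succ n ih =>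
    obtain ⟨hq, hl, hm, hs⟩ := ih
    refine ⟨?_, ?_, ?_, ?_⟩
    · simp only [qpSeq]
      have h1 : t * (qpSeq t d n).1 + (qpSeq t d n).2
          = lam^n + mu * (qpSeq t d n).1 := by linear_combination hl + (qpSeq t d n).1 * hsum.symm
      rw [h1]
      have := mul_nonneg hmu hq
      have := pow_nonneg hlam0 n
      linarith
    · simp only [qpSeq]
      rw [pow_succ]
      linear_combination lam * hl - (qpSeq t d n).1 * hle
    · simp only [qpSeq]
      rw [pow_succ]
      linear_combination mu * hm - (qpSeq t d n).1 * hme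
    · simp only [qpSeq]
      rw [pow_succ]
      have h1 : (t * (qpSeq t d n).1 + (qpSeq t d n).2) * s1 + -(d * (qpSeq t d n).1)
          = (qpSeq t d n).1 * (s1^2 + (D - d)) + (qpSeq t d n).2 * s1 := by
        linear_combination (-(qpSeq t d n).1) * hs1eq
      rw [h1]
      have h2 : (qpSeq t d n).1 * (s1^2 + (D - d)) ≤ (qpSeq t d n).1 * s1^2 :=
        mul_le_mul_of_nonneg_left (by linarith) hq
      have h3 : ((qpSeq t d n).1 * s1 + (qpSeq t d n).2) * s1 ≤ s1^n * s1 :=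
        mul_le_mul_of_nonneg_right hs hs10
      nlinarith [h2, h3]

lemma trace_disc (a b c p q r : ℝ) (ha0 : 0 ≤ a) (hc0 : 0 ≤ c) (hp0 : 0 ≤ p) (hr0 : 0 ≤ r)
    (hdetA : b^2 ≤ a*c) (hdetB : q^2 ≤ p*r) :
    0 ≤ a*p + b*q + (b*q + c*r)
    ∧ 4*((a*c - b^2)*(p*r - q^2)) ≤ (a*p + b*q + (b*q + c*r))^2
    ∧ (a*p + b*q)*(b*q + c*r) - ((a*q + b*r + b*p + c*q)/2)^2 ≤ (a*c - b^2)*(p*r - q^2) := by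
  obtain ⟨w, hwdef⟩ : ∃ x : ℝ, x = Real.sqrt (a*c*p*r) := ⟨_, rfl⟩
  have hw0 : 0 ≤ w := hwdef ▸ Real.sqrt_nonneg _
  have hw2 : w^2 = a*c*p*r := by rw [hwdef]; exact Real.sq_sqrt (by positivity)
  have hwbq : b^2*q^2 ≤ w^2 := by
    rw [hw2]
    calc b^2*q^2 ≤ (a*c)*q^2 := by nlinarith [sq_nonneg q]
    _ ≤ (a*c)*(p*r) := by nlinarith [mul_nonneg ha0 hc0]
    _ = a*c*p*r := by ring
  have hwabs : -w ≤ b*q ∧ b*q ≤ w := by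
    constructor <;> nlinarith [sq_nonneg (b*q - w), sq_nonneg (b*q + w)]
  have h2w : 2*w ≤ a*p + c*r := by
    have h1 : a*c*p*r ≤ ((a*p+c*r)/2)^2 := by nlinarith [sq_nonneg (a*p - c*r)]
    have h2 : w ≤ (a*p+c*r)/2 := by
      rw [hwdef]
      calc Real.sqrt (a*c*p*r) ≤ Real.sqrt (((a*p+c*r)/2)^2) := Real.sqrt_le_sqrt h1
      _ = (a*p+c*r)/2 := Real.sqrt_sq (by positivity)
    linarith
  refine ⟨by nlinarith [hwabs.1], ?_, by nlinarith [sq_nonneg (q*(a-c) - b*(p-r))]⟩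
  rcases le_or_gt 0 (b*q) with hbq | hbq
  · nlinarith [mul_nonneg hbq (add_nonneg (mul_nonneg ha0 hp0) (mul_nonneg hc0 hr0)),
      sq_nonneg (a*p - c*r), mul_nonneg (mul_nonneg (sq_nonneg b) hp0) hr0,
      mul_nonneg (mul_nonneg ha0 hc0) (sq_nonneg q)]
  · have h1 : 0 ≤ a*p + c*r - 2*w := by linarith
    have h2 : 0 ≤ a*p + c*r + 2*w + 4*(b*q) := by nlinarith [hwabs.1]
    have h3 : 2*(-(b*q))*w ≤ b^2*(p*r) + (a*c)*q^2 := by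
      nlinarith [sq_nonneg (b^2*(p*r) - (a*c)*q^2), sq_nonneg (b^2*(p*r) + (a*c)*q^2 + 2*(b*q)*w),
        mul_nonneg (mul_nonneg (sq_nonneg b) hp0) hr0, mul_nonneg (mul_nonneg ha0 hc0) (sq_nonneg q)]
    nlinarith [mul_nonneg h1 h2, h3, hw2]

lemma sqdiff_le (al ga be : ℝ) : (al-ga)^2 ≤ (al+ga)^2 - 4*(al*ga - be^2) := by
  nlinarith [sq_nonneg be]

lemma rayleigh_upper (al be ga s1 : ℝ) (h1 : al ≤ s1) (h2 : ga ≤ s1)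
    (hpr : (s1-al)*(s1-ga) = be^2) (x y : ℝ) :
    al*x^2+2*be*x*y+ga*y^2 ≤ s1*(x^2+y^2) := by
  have := quadform_nonneg (s1 - al) (s1 - ga) be x y (by linarith) (by linarith) hpr
  nlinarith only [this]

lemma rayleigh_lower (al be ga s2 : ℝ) (h1 : s2 ≤ al) (h2 : s2 ≤ ga)
    (hpr : (al-s2)*(ga-s2) = be^2) (x y : ℝ) :
    s2*(x^2+y^2) ≤ al*x^2+2*be*x*y+ga*y^2 := by
  have := quadform_nonneg (al - s2) (ga - s2) (-be) x y (by linarith) (by linarith)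
    (by rw [hpr]; ring)
  nlinarith only [this]

theorem statement2 (A B : Matrix (Fin 2) (Fin 2) ℝ) (hA : A.PosSemidef) (hB : B.PosSemidef)
    (K : ℕ) (hK : 1 ≤ K) :
    (1 / 2 : ℝ) * specNorm ((A * B) ^ K + (B * A) ^ K) ≤
      specNorm ((1 / 2 : ℝ) • (A * B + B * A)) ^ K := by
  obtain ⟨hsA, ha0, hc0, hdetA⟩ := psd_facts A hA
  obtain ⟨hsB, hp0, hr0, hdetB⟩ := psd_facts B hB
  obtain ⟨a, ha⟩ : ∃ x : ℝ, x = A 0 0 := ⟨_, rfl⟩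
  obtain ⟨b, hb⟩ : ∃ x : ℝ, x = A 0 1 := ⟨_, rfl⟩
  obtain ⟨c, hc⟩ : ∃ x : ℝ, x = A 1 1 := ⟨_, rfl⟩
  obtain ⟨p, hp⟩ : ∃ x : ℝ, x = B 0 0 := ⟨_, rfl⟩
  obtain ⟨q, hq⟩ : ∃ x : ℝ, x = B 0 1 := ⟨_, rfl⟩
  obtain ⟨r, hr⟩ : ∃ x : ℝ, x = B 1 1 := ⟨_, rfl⟩
  rw [← ha] at ha0
  rw [← hc] at hc0
  rw [← ha, ← hb, ← hc] at hdetA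
  rw [← hb] at hsA
  rw [← hp] at hp0
  rw [← hr] at hr0
  rw [← hp, ← hq, ← hr] at hdetB
  rw [← hq] at hsB
  set S : Matrix (Fin 2) (Fin 2) ℝ := (1 / 2 : ℝ) • (A * B + B * A) with hSdef
  set Z : Matrix (Fin 2) (Fin 2) ℝ := (A*B)^K + (B*A)^K with hZdef
  -- scalar abbreviations
  obtain ⟨al, hal⟩ : ∃ x : ℝ, x = a*p + b*q := ⟨_, rfl⟩
  obtain ⟨be, hbe⟩ : ∃ x : ℝ, x = (a*q + b*r + b*p + c*q)/2 := ⟨_, rfl⟩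
  obtain ⟨ga, hga⟩ : ∃ x : ℝ, x = b*q + c*r := ⟨_, rfl⟩
  obtain ⟨t, htdef⟩ : ∃ x : ℝ, x = al + ga := ⟨_, rfl⟩
  obtain ⟨D, hDdef⟩ : ∃ x : ℝ, x = al*ga - be^2 := ⟨_, rfl⟩
  obtain ⟨d, hddef⟩ : ∃ x : ℝ, x = (a*c - b^2)*(p*r - q^2) := ⟨_, rfl⟩
  -- matrix entry computations
  have hm00 : (A*B) 0 0 = a*p + b*q := by
    simp [Matrix.mul_apply, Fin.sum_univ_two, hsB, ← ha, ← hb, ← hp, ← hq]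
  have hm01 : (A*B) 0 1 = a*q + b*r := by
    simp [Matrix.mul_apply, Fin.sum_univ_two, hsB, ← ha, ← hb, ← hq, ← hr]
  have hm10 : (A*B) 1 0 = b*p + c*q := by
    simp [Matrix.mul_apply, Fin.sum_univ_two, hsA, hsB, ← hb, ← hc, ← hp, ← hq]
  have hm11 : (A*B) 1 1 = b*q + c*r := by
    simp [Matrix.mul_apply, Fin.sum_univ_two, hsA, hsB, ← hb, ← hc, ← hq, ← hr]
  have hn00 : (B*A) 0 0 = p*a + q*b := by
    simp [Matrix.mul_apply, Fin.sum_univ_two, hsA, ← ha, ← hb, ← hp, ← hq]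
  have hn01 : (B*A) 0 1 = p*b + q*c := by
    simp [Matrix.mul_apply, Fin.sum_univ_two, hsA, ← hb, ← hc, ← hp, ← hq]
  have hn10 : (B*A) 1 0 = q*a + r*b := by
    simp [Matrix.mul_apply, Fin.sum_univ_two, hsA, hsB, ← ha, ← hb, ← hq, ← hr]
  have hn11 : (B*A) 1 1 = q*b + r*c := by
    simp [Matrix.mul_apply, Fin.sum_univ_two, hsA, hsB, ← hb, ← hc, ← hq, ← hr]
  have hS00 : S 0 0 = al := by
    rw [hSdef]; simp [Matrix.add_apply, hm00, hn00, hal]; ring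
  have hS01 : S 0 1 = be := by
    rw [hSdef]; simp [Matrix.add_apply, hm01, hn01, hbe]; ring
  have hS10 : S 1 0 = be := by
    rw [hSdef]; simp [Matrix.add_apply, hm10, hn10, hbe]; ring
  have hS11 : S 1 1 = ga := by
    rw [hSdef]; simp [Matrix.add_apply, hm11, hn11, hga]; ring
  -- basic scalar inequalities
  have hd0 : 0 ≤ d := by
    rw [hddef]; exact mul_nonneg (by linarith) (by linarith)
  obtain ⟨htd0, htdd, htdD⟩ := trace_disc a b c p q r ha0 hc0 hp0 hr0 hdetA hdetB
  have hDd : D ≤ d := by rw [hDdef, hddef, hal, hbe, hga]; exact htdD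
  have ht0 : 0 ≤ t := by rw [htdef, hal, hga]; exact htd0
  have htd : 4*d ≤ t^2 := by rw [htdef, hal, hga, hddef]; exact htdd
  -- eigenvalues of AB
  have hdisc_d : 0 ≤ t^2 - 4*d := by linarith
  have hdisc_D : 0 ≤ t^2 - 4*D := by linarith
  obtain ⟨lam, hlamdef⟩ : ∃ x : ℝ, x = (t + Real.sqrt (t^2 - 4*d))/2 := ⟨_, rfl⟩
  obtain ⟨mu, hmudef⟩ : ∃ x : ℝ, x = (t - Real.sqrt (t^2 - 4*d))/2 := ⟨_, rfl⟩
  have hsqd : (Real.sqrt (t^2 - 4*d))^2 = t^2 - 4*d := Real.sq_sqrt hdisc_d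
  have hsum : lam + mu = t := by rw [hlamdef, hmudef]; ring
  have hprod : lam * mu = d := by rw [hlamdef, hmudef]; linear_combination (-(1:ℝ)/4) * hsqd
  have hmu0 : 0 ≤ mu := by
    have h1 : Real.sqrt (t^2 - 4*d) ≤ t := by
      calc Real.sqrt (t^2 - 4*d) ≤ Real.sqrt (t^2) := Real.sqrt_le_sqrt (by linarith)
      _ = t := by rw [Real.sqrt_sq ht0]
    rw [hmudef]; linarith
  have hml : mu ≤ lam := by
    rw [hlamdef, hmudef]
    have := Real.sqrt_nonneg (t^2 - 4*d)
    linarith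
  -- eigenvalues of S
  obtain ⟨s1, hs1def⟩ : ∃ x : ℝ, x = (t + Real.sqrt (t^2 - 4*D))/2 := ⟨_, rfl⟩
  obtain ⟨s2, hs2def⟩ : ∃ x : ℝ, x = t - s1 := ⟨_, rfl⟩
  have hsqD : (Real.sqrt (t^2 - 4*D))^2 = t^2 - 4*D := Real.sq_sqrt hdisc_D
  have hs1eq : s1^2 = t*s1 - D := by rw [hs1def]; linear_combination ((1:ℝ)/4) * hsqD
  have hs2eq : s2^2 = t*s2 - D := by rw [hs2def]; linear_combination hs1eq
  have hls : lam ≤ s1 := by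
    rw [hlamdef, hs1def]
    have := Real.sqrt_le_sqrt (by linarith : t^2 - 4*d ≤ t^2 - 4*D)
    linarith
  have hlam0 : 0 ≤ lam := le_trans hmu0 hml
  have hs10 : 0 ≤ s1 := le_trans hlam0 hls
  have hs2mu : s2 ≤ mu := by rw [hs2def]; linarith
  -- interval facts
  have habsag : |al - ga| ≤ Real.sqrt (t^2 - 4*D) := by
    have h1 : (al-ga)^2 ≤ t^2 - 4*D := by rw [htdef, hDdef]; exact sqdiff_le al ga be
    calc |al - ga| = Real.sqrt ((al-ga)^2) := (Real.sqrt_sq_eq_abs _).symm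
    _ ≤ Real.sqrt (t^2 - 4*D) := Real.sqrt_le_sqrt h1
  have habs := abs_le.mp habsag
  have hals1 : al ≤ s1 := by rw [hs1def]; rw [htdef] at habs ⊢; linarith [habs.1, habs.2]
  have hgas1 : ga ≤ s1 := by rw [hs1def]; rw [htdef] at habs ⊢; linarith [habs.1, habs.2]
  have hs2al : s2 ≤ al := by
    rw [hs2def, hs1def]; rw [htdef] at habs ⊢; linarith [habs.1, habs.2]
  have hs2ga : s2 ≤ ga := by
    rw [hs2def, hs1def]; rw [htdef] at habs ⊢; linarith [habs.1, habs.2]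
  have hprod1 : (s1 - al)*(s1 - ga) = be^2 := by
    rw [htdef, hDdef] at hs1eq; linear_combination hs1eq
  have hprod2 : (al - s2)*(ga - s2) = be^2 := by
    rw [htdef, hDdef] at hs2eq; linear_combination hs2eq
  -- quadratic form bounds
  have hR1 : ∀ x y : ℝ, al*x^2+2*be*x*y+ga*y^2 ≤ s1*(x^2+y^2) :=
    rayleigh_upper al be ga s1 hals1 hgas1 hprod1
  have hR2 : ∀ x y : ℝ, s2*(x^2+y^2) ≤ al*x^2+2*be*x*y+ga*y^2 :=
    rayleigh_lower al be ga s2 hs2al hs2ga hprod2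
  -- sequence facts
  obtain ⟨hQ0, hlamK, hmuK, hfs1⟩ := qp_facts t d D lam mu s1 hsum hprod hmu0 hml hls hDd hs1eq K
  obtain ⟨Q, hQdef⟩ : ∃ x : ℝ, x = (qpSeq t d K).1 := ⟨_, rfl⟩
  obtain ⟨P, hPdef⟩ : ∃ x : ℝ, x = (qpSeq t d K).2 := ⟨_, rfl⟩
  rw [← hQdef] at hQ0
  rw [← hQdef, ← hPdef] at hlamK hmuK hfs1
  have hlamKn : 0 ≤ lam^K := pow_nonneg hlam0 K
  have hmuKn : 0 ≤ mu^K := pow_nonneg hmu0 K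
  have hs1Kn : 0 ≤ s1^K := pow_nonneg hs10 K
  have hf1lam : lam^K ≤ Q*s1 + P := by
    have h := mul_le_mul_of_nonneg_left hls hQ0
    have h2 : Q*lam + P ≤ Q*s1 + P := by linarith only [h]
    rw [hlamK] at h2; linarith only [h2]
  have hf1low : -(s1^K) ≤ Q*s1 + P := by linarith
  have hmuKle : mu^K ≤ s1^K := pow_le_pow_left₀ hmu0 (by linarith) K
  have hf2eq : Q*s2 + P = lam^K + mu^K - (Q*s1 + P) := by
    rw [hs2def, ← hlamK, ← hmuK, ← hsum]; ring
  have hf2up : Q*s2 + P ≤ s1^K := by rw [hf2eq]; linarith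
  have hf2low : -(s1^K) ≤ Q*s2 + P := by rw [hf2eq]; linarith [hfs1]
  have hfsq1 : (Q*s1+P)^2 ≤ (s1^K)^2 := sq_le_sq' hf1low hfs1
  have hfsq2 : (Q*s2+P)^2 ≤ (s1^K)^2 := sq_le_sq' hf2low hf2up
  -- matrix representation of Z
  have hpow := pow_rep (A*B) t d (by rw [hm00, hm11, htdef, hal, hga])
    (by rw [hm00, hm01, hm10, hm11, hddef]; ring) K
  have hpowBA := pow_rep (B*A) t d (by rw [hn00, hn11, htdef, hal, hga]; ring)
    (by rw [hn00, hn01, hn10, hn11, hddef]; ring) K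
  have hMt' : B*A = (2:ℝ) • S - A*B := by rw [hSdef]; module
  have hZrep : Z = (2*Q) • S + (2*P) • (1 : Matrix (Fin 2) (Fin 2) ℝ) := by
    rw [hZdef, hpow, hpowBA, hMt', ← hQdef, ← hPdef]
    module
  have hZ00 : Z 0 0 = 2*Q*al + 2*P := by
    rw [hZrep]; simp [Matrix.add_apply, Matrix.one_apply, hS00]; try ring
  have hZ01 : Z 0 1 = 2*Q*be := by
    rw [hZrep]; simp [Matrix.add_apply, Matrix.one_apply, hS01]; try ring
  have hZ10 : Z 1 0 = 2*Q*be := by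
    rw [hZrep]; simp [Matrix.add_apply, Matrix.one_apply, hS10]; try ring
  have hZ11 : Z 1 1 = 2*Q*ga + 2*P := by
    rw [hZrep]; simp [Matrix.add_apply, Matrix.one_apply, hS11]; try ring
  -- upper bound on LHS
  have hZle : specNorm Z ≤ 2*s1^K := by
    apply specNorm_le_of Z (2*s1^K) (by positivity)
    intro x y
    rw [hZ00, hZ01, hZ10, hZ11]
    have := main_scalar al be ga P Q s1 s2 (s1^K) x y (hR1 x y) (hR2 x y)
      (by rw [htdef, hDdef] at hs1eq; linear_combination hs1eq)
      (by rw [htdef, hDdef] at hs2eq; linear_combination hs2eq)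
      hfsq1 hfsq2
    linarith only [this]
  -- lower bound on RHS via eigenvector
  have hSge : s1 ≤ specNorm S := by
    rcases eq_or_ne (![be, s1 - al]) 0 with hw | hw
    · have hbe0 : be = 0 := by simpa using congr_fun hw 0
      have hs1al : s1 - al = 0 := by simpa using congr_fun hw 1
      apply specNorm_ge_of S s1 hs10 ![1, 0] (by
        intro h
        have := congr_fun h 0
        simp at this)
      ext i
      fin_cases i <;>
        simp [Matrix.mulVec, dotProduct, Fin.sum_univ_two, hS00, hS01, hS10, hS11, hbe0] <;>
        linarith [hs1al]
    · apply specNorm_ge_of S s1 hs10 ![be, s1 - al] hw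
      ext i
      fin_cases i <;>
        simp [Matrix.mulVec, dotProduct, Fin.sum_univ_two, hS00, hS01, hS10, hS11]
      · ring
      · linear_combination (-1)*hprod1
  have hfinal : s1^K ≤ specNorm S ^ K := pow_le_pow_left₀ hs10 hSge K
  linarith only [hZle, hfinal]
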